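/- Let $\mathcal{C}$ be an additive category, $X\colon \mathcal{C}\to\mathcal{C}$ additive and locally nilpotent, and $T(X)$ the free monad on $X$. For an object $\mathsf{M} = (M, h_{\mathsf{M}})$ of $\mathcal{C}^{T(X)}$ (identified with a pair with $h_{\mathsf{M}}\colon X(M) \to M$), the following are equivalent: (1) $\mathsf{M}$ is a direct summand of an object of the form $f_!(N)$ for some $N \in \mathcal{C}$; (2) the structure map $h_{\mathsf{M}}\colon X(M) \to M$ is a split monomorphism in $\mathcal{C}$; (3) $\mathsf{M}$ is isomorphic to $f_!(N')$ for some $N' \in \mathcal{C}$. -/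

import Mathlib

open CategoryTheory Limits

universe v u

variable {C : Type u} [Category.{v} C]

/-- The power `X^n` of an endofunctor, with `X^(n+1) = X^n ⋙ X`. -/
def fpow (X : C ⥤ C) : ℕ → (C ⥤ C)
  | 0 => 𝟭 C
  | n + 1 => fpow X n ⋙ X

/-- `X` is locally nilpotent if every object is annihilated by some power of `X`. -/
def LocallyNilpotent (X : C ⥤ C) : Prop :=
  ∀ M : C, ∃ n : ℕ, IsZero ((fpow X n).obj M)

/-- The category `(X ⇓ Id)` of `X`-modules, identified with the Eilenberg–Moore category
of the free monad on `X`. -/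
structure XMod (X : C ⥤ C) : Type max u v where
  carrier : C
  str : X.obj carrier ⟶ carrier

/-- Morphisms of `X`-modules. -/
@[ext]
structure XModHom {X : C ⥤ C} (M N : XMod X) : Type v where
  hom : M.carrier ⟶ N.carrier
  comm : M.str ≫ hom = X.map hom ≫ N.str

instance (X : C ⥤ C) : Category (XMod X) where
  Hom := XModHom
  id M := ⟨𝟙 M.carrier, by simp⟩
  comp f g := ⟨f.hom ≫ g.hom, by
    rw [← Category.assoc, f.comm, Category.assoc, g.comm, ← Category.assoc, ← Functor.map_comp]⟩
  id_comp f := by apply XModHom.ext; simp [CategoryStruct.id, CategoryStruct.comp]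
  comp_id f := by apply XModHom.ext; simp [CategoryStruct.id, CategoryStruct.comp]
  assoc f g h := by apply XModHom.ext; simp [CategoryStruct.comp]

@[simp] lemma XMod.id_hom {X : C ⥤ C} (M : XMod X) : (𝟙 M : XModHom M M).hom = 𝟙 M.carrier := rfl
@[simp] lemma XMod.comp_hom {X : C ⥤ C} {M N P : XMod X} (f : M ⟶ N) (g : N ⟶ P) :
    (f ≫ g).hom = f.hom ≫ g.hom := rfl

/-- `F` is the free `X`-module `f₁(N)` on `N`, encoded via the universal
property of the free–forgetful adjunction `f₁ ⊣ f⋆`. -/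
structure IsFreeXModOn (X : C ⥤ C) (F : XMod X) (N : C) where
  unit : N ⟶ F.carrier
  lift : ∀ (P : XMod X), (N ⟶ P.carrier) → (F ⟶ P)
  fac : ∀ (P : XMod X) (g : N ⟶ P.carrier), unit ≫ (lift P g).hom = g
  uniq : ∀ (P : XMod X) (g : N ⟶ P.carrier) (k : F ⟶ P), unit ≫ k.hom = g → k = lift P g

/-- Iterated structure map `X^n P → P`. -/
def iterStr {X : C ⥤ C} (P : XMod X) : ∀ n, (fpow X n).obj P.carrier ⟶ P.carrier
  | 0 => 𝟙 _
  | n + 1 => X.map (iterStr P n) ≫ P.str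

/-- Iterated retraction `M → X^n M`. -/
def iterRetr {X : C ⥤ C} {M : C} (r : M ⟶ X.obj M) : ∀ n, M ⟶ (fpow X n).obj M
  | 0 => 𝟙 _
  | n + 1 => r ≫ X.map (iterRetr r n)

lemma fpow_isZero_succ {X : C ⥤ C} [Preadditive C] [X.Additive] {M : C} {n : ℕ}
    (h : IsZero ((fpow X n).obj M)) : IsZero ((fpow X (n + 1)).obj M) :=
  X.map_isZero h

/-- Let `C` be additive and idempotent complete and `X` an additive
locally nilpotent endofunctor. For an `X`-module `M` the following are equivalent:
(1) `M` is a direct summand of a free module `f₁(N)`;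
(2) the structure map of `M` is a split monomorphism;
(3) `M` is (isomorphic to) a free module `f₁(N')`. -/
theorem relative_projective_tfae
    [Preadditive C] [HasFiniteBiproducts C] [IsIdempotentComplete C]
    {X : C ⥤ C} [X.Additive] (hX : LocallyNilpotent X) (M : XMod X) :
    List.TFAE
      [ ∃ (N : C) (F : XMod X) (_ : Nonempty (IsFreeXModOn X F N))
          (s : M ⟶ F) (r : F ⟶ M), s ≫ r = 𝟙 M,
        ∃ r : M.carrier ⟶ X.obj M.carrier, M.str ≫ r = 𝟙 (X.obj M.carrier),
        ∃ N' : C, Nonempty (IsFreeXModOn X M N') ] := by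
  tfae_have 1 → 2 := by
    rintro ⟨N, F, ⟨hF⟩, s, rr, hsr⟩
    -- first show the structure map of the free module `F` is a split mono
    have : HasBinaryBiproducts C := hasBinaryBiproducts_of_finite_biproducts C
    let φ : N ⊞ X.obj F.carrier ⟶ F.carrier := biprod.desc hF.unit F.str
    let P' : XMod X := ⟨N ⊞ X.obj F.carrier, X.map φ ≫ biprod.inr⟩
    let Φ : P' ⟶ F := ⟨φ, by
      show (X.map φ ≫ biprod.inr) ≫ φ = X.map φ ≫ F.str
      simp [φ]⟩
    let ψ : F ⟶ P' := hF.lift P' biprod.inl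
    have hψu : hF.unit ≫ ψ.hom = biprod.inl := hF.fac P' biprod.inl
    have h1 : ψ ≫ Φ = 𝟙 F := by
      rw [hF.uniq F hF.unit (ψ ≫ Φ) (by
          rw [XMod.comp_hom]
          show hF.unit ≫ ψ.hom ≫ φ = hF.unit
          rw [← Category.assoc, hψu]
          simp [φ]),
        hF.uniq F hF.unit (𝟙 F) (by simp)]
    have h1' : ψ.hom ≫ φ = 𝟙 F.carrier := by
      have := congrArg XModHom.hom h1
      simpa [Φ] using this
    have h2 : F.str ≫ ψ.hom = X.map ψ.hom ≫ (X.map φ ≫ biprod.inr) := ψ.comm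
    have hFsplit : F.str ≫ (ψ.hom ≫ biprod.snd) = 𝟙 (X.obj F.carrier) := by
      rw [← Category.assoc, h2]
      simp [← Functor.map_comp, h1']
    refine ⟨s.hom ≫ (ψ.hom ≫ biprod.snd) ≫ X.map rr.hom, ?_⟩
    have hsr' : s.hom ≫ rr.hom = 𝟙 M.carrier := by
      have := congrArg XModHom.hom hsr; simpa using this
    rw [← Category.assoc, s.comm, Category.assoc, ← Category.assoc F.str, hFsplit]
    simp [← Functor.map_comp, hsr']
  tfae_have 2 → 3 := by
    rintro ⟨r, hr⟩
    set e : M.carrier ⟶ M.carrier := 𝟙 M.carrier - r ≫ M.str with he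
    have hee : e ≫ e = e := by
      simp only [he, Preadditive.sub_comp, Preadditive.comp_sub, Category.id_comp,
        Category.comp_id]
      rw [Category.assoc, ← Category.assoc M.str, hr]
      simp
    obtain ⟨N', i, pr, hip, hpi⟩ := IsIdempotentComplete.idempotents_split M.carrier e hee
    obtain ⟨n, hn⟩ := hX M.carrier
    -- zero-ness of higher powers
    have hz' : ∀ k, IsZero ((fpow X (n + k)).obj M.carrier) := by
      intro k
      induction k with
      | zero => exact hn
      | succ k ih => exact fpow_isZero_succ ih
    have hz : ∀ j, n ≤ j → IsZero ((fpow X j).obj M.carrier) := by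
      intro j hj
      obtain ⟨k, rfl⟩ := Nat.exists_eq_add_of_le hj
      exact hz' k
    have hretr0 : X.map (iterRetr r n) = 0 :=
      (hz (n + 1) (Nat.le_succ n)).eq_of_tgt _ 0
    -- basic identities
    have hstr_e : M.str ≫ e = 0 := by
      simp only [he, Preadditive.comp_sub, Category.comp_id]
      rw [← Category.assoc, hr]; simp
    have hstr_pr : M.str ≫ pr = 0 := by
      have h1 : pr ≫ i ≫ pr = pr := by rw [hip, Category.comp_id]
      conv_lhs => rw [← h1]
      rw [← Category.assoc pr i, hpi, ← Category.assoc, hstr_e, zero_comp]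
    have hie : i ≫ e = i := by rw [← hpi, ← Category.assoc, hip]; simp
    have hir : i ≫ r = 0 := by
      have her : e ≫ r = 0 := by
        simp only [he, Preadditive.sub_comp, Category.id_comp]
        rw [Category.assoc, hr]; simp
      rw [← hie, Category.assoc, her, comp_zero]
    -- the terms of the lift
    refine ⟨N', ⟨{
      unit := i
      lift := fun P g => ⟨∑ j ∈ Finset.range (n + 1),
          iterRetr r j ≫ (fpow X j).map (pr ≫ g) ≫ iterStr P j, ?_⟩
      fac := ?_
      uniq := ?_ }⟩⟩
    · -- module morphism condition
      have hterm : ∀ j, M.str ≫ (iterRetr r (j + 1) ≫ (fpow X (j + 1)).map (pr ≫ g) ≫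
          iterStr P (j + 1)) =
          X.map (iterRetr r j ≫ (fpow X j).map (pr ≫ g) ≫ iterStr P j) ≫ P.str := by
        intro j
        have hr' := reassoc_of% hr
        simp only [iterRetr, iterStr, fpow, Functor.comp_map, Category.assoc, hr']
        simp [Functor.map_comp]
      rw [Preadditive.comp_sum, Finset.sum_range_succ', X.map_sum, Preadditive.sum_comp,
        Finset.sum_range_succ]
      have h0 : M.str ≫ (iterRetr r 0 ≫ (fpow X 0).map (pr ≫ g) ≫ iterStr P 0) = 0 := by
        show M.str ≫ (𝟙 _ ≫ (pr ≫ g) ≫ 𝟙 _) = 0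
        rw [Category.id_comp, Category.comp_id, ← Category.assoc, hstr_pr, zero_comp]
      have hlast : X.map (iterRetr r n ≫ (fpow X n).map (pr ≫ g) ≫ iterStr P n) ≫ P.str = 0 := by
        rw [Functor.map_comp, hretr0]; simp
      rw [h0, add_zero, hlast, add_zero]
      exact Finset.sum_congr rfl fun j _ => hterm j
    · -- factorization
      intro P g
      rw [Preadditive.comp_sum, Finset.sum_range_succ']
      have h0 : i ≫ (iterRetr r 0 ≫ (fpow X 0).map (pr ≫ g) ≫ iterStr P 0) = g := by
        show i ≫ 𝟙 _ ≫ (pr ≫ g) ≫ 𝟙 _ = g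
        rw [Category.id_comp, Category.comp_id, ← Category.assoc, hip, Category.id_comp]
      have hj : ∀ j, i ≫ (iterRetr r (j + 1) ≫ (fpow X (j + 1)).map (pr ≫ g) ≫
          iterStr P (j + 1)) = 0 := by
        intro j
        have hir' := reassoc_of% hir
        simp only [iterRetr, Category.assoc, hir', zero_comp, comp_zero]
        have h' : i ≫ iterRetr r (j + 1) = 0 := by
          show i ≫ r ≫ X.map (iterRetr r j) = 0
          rw [← Category.assoc, hir, zero_comp]
        exact (Category.assoc i (iterRetr r (j + 1))
          ((fpow X (j + 1)).map (pr ≫ g) ≫ iterStr P (j + 1))).symm.trans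
          ((congrArg (fun x => x ≫ ((fpow X (j + 1)).map (pr ≫ g) ≫ iterStr P (j + 1))) h').trans
            zero_comp)
      rw [h0, Finset.sum_eq_zero fun j _ => hj j, zero_add]
    · -- uniqueness
      intro P g k hk
      have key : ∀ (k₁ k₂ : M ⟶ P), i ≫ k₁.hom = i ≫ k₂.hom → k₁ = k₂ := by
        intro k₁ k₂ h
        apply XModHom.ext
        set d : M.carrier ⟶ P.carrier := k₁.hom - k₂.hom with hd
        have hcomm : M.str ≫ d = X.map d ≫ P.str := by
          simp only [hd, Preadditive.comp_sub, Functor.map_sub, Preadditive.sub_comp,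
            k₁.comm, k₂.comm]
        have hid : i ≫ d = 0 := by simp [hd, h]
        have hed : e ≫ d = 0 := by rw [← hpi, Category.assoc, hid, comp_zero]
        have hstep : d = r ≫ X.map d ≫ P.str := by
          conv_lhs => rw [show d = e ≫ d + (r ≫ M.str) ≫ d from by
            rw [← Preadditive.add_comp, he]; simp]
          rw [hed, zero_add, Category.assoc, hcomm]
        have hiter : ∀ j, d = iterRetr r j ≫ (fpow X j).map d ≫ iterStr P j := by
          intro j
          induction j with
          | zero => show d = 𝟙 _ ≫ (𝟭 C).map d ≫ 𝟙 _; simp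
          | succ j ih =>
            show d = (r ≫ X.map (iterRetr r j)) ≫ X.map ((fpow X j).map d) ≫
              (X.map (iterStr P j) ≫ P.str)
            calc d = r ≫ X.map d ≫ P.str := hstep
            _ = r ≫ X.map (iterRetr r j ≫ (fpow X j).map d ≫ iterStr P j) ≫ P.str := by
                rw [← ih]
            _ = _ := by simp [Functor.map_comp]
        have hdz : d = 0 := by
          have := hiter (n + 1)
          rw [this]
          have : iterRetr r (n + 1) = (0 : M.carrier ⟶ (fpow X (n + 1)).obj M.carrier) :=
            (hz (n + 1) (Nat.le_succ n)).eq_of_tgt _ 0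
          rw [this, zero_comp]
        have := sub_eq_zero.mp (hd ▸ hdz)
        exact this
      refine key _ _ ?_
      rw [hk]
      -- `i ≫ lift.hom = g` is the factorization just proved
      rw [Preadditive.comp_sum, Finset.sum_range_succ']
      have h0 : i ≫ (iterRetr r 0 ≫ (fpow X 0).map (pr ≫ g) ≫ iterStr P 0) = g := by
        show i ≫ 𝟙 _ ≫ (pr ≫ g) ≫ 𝟙 _ = g
        rw [Category.id_comp, Category.comp_id, ← Category.assoc, hip, Category.id_comp]
      have hj : ∀ j, i ≫ (iterRetr r (j + 1) ≫ (fpow X (j + 1)).map (pr ≫ g) ≫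
          iterStr P (j + 1)) = 0 := by
        intro j
        have hir' := reassoc_of% hir
        simp only [iterRetr, Category.assoc, hir', zero_comp, comp_zero]
        have h' : i ≫ iterRetr r (j + 1) = 0 := by
          show i ≫ r ≫ X.map (iterRetr r j) = 0
          rw [← Category.assoc, hir, zero_comp]
        exact (Category.assoc i (iterRetr r (j + 1))
          ((fpow X (j + 1)).map (pr ≫ g) ≫ iterStr P (j + 1))).symm.trans
          ((congrArg (fun x => x ≫ ((fpow X (j + 1)).map (pr ≫ g) ≫ iterStr P (j + 1))) h').trans
            zero_comp)
      rw [h0, Finset.sum_eq_zero fun j _ => hj j, zero_add]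
  tfae_have 3 → 1 := by
    rintro ⟨N', ⟨hF⟩⟩
    exact ⟨N', M, ⟨hF⟩, 𝟙 M, 𝟙 M, by simp⟩
  tfae_finish
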